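/- Let ℓ₁, ℓ₂ be nonzero linear forms and q₁, q₂ quadratic forms in ℂ[X,Y,Z] with ℓ₁ ∤ q₁ and ℓ₂ ∤ q₂. Then the ℂ-vector space of quadruples (v₁, v₂, u₁, u₂), where v₁ and u₂ are linear forms and v₂ and u₁ are quadratic forms, satisfying the four equations v₁·q₁ + ℓ₂·u₁ = 0, v₁·ℓ₁ + ℓ₂·u₂ = 0, v₂·q₁ + q₂·u₁ = 0, v₂·ℓ₁ + q₂·u₂ = 0, is one-dimensional, spanned by (ℓ₂, q₂, −q₁, −ℓ₁). (This is the kernel computation underlying the fibre ℙ²³ in the description of the codimension-6 stratum X₅ of M_{P²}(6,3) as a bundle over Hilb_{P²}(2) × Hilb_{P²}(2).) -/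

import Mathlib

open MvPolynomial

abbrev R3 := MvPolynomial (Fin 3) ℂ

noncomputable def homT : R3 →ₐ[ℂ] Polynomial R3 :=
  aeval (fun i => Polynomial.C (X i) * Polynomial.X)

lemma homT_monomial (d : Fin 3 →₀ ℕ) (c : ℂ) :
    homT (monomial d c) = Polynomial.C (monomial d c) * Polynomial.X ^ d.degree := by
  rw [homT, aeval_monomial]
  have h1 : (Finsupp.prod d fun i k => (Polynomial.C (X i : R3) * Polynomial.X) ^ k)
      = Polynomial.C (Finsupp.prod d fun i k => (X i : R3) ^ k) * Polynomial.X ^ d.degree := by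
    rw [Finsupp.prod]
    simp_rw [mul_pow, ← Polynomial.C_pow]
    rw [Finset.prod_mul_distrib, ← map_prod, Finset.prod_pow_eq_pow_sum]
    rfl
  rw [h1, monomial_eq, map_mul]
  have : (algebraMap ℂ (Polynomial R3)) c = Polynomial.C (C c) := rfl
  rw [this]
  ring

lemma homT_coeff (p : R3) (n : ℕ) :
    (homT p).coeff n = homogeneousComponent n p := by
  induction p using MvPolynomial.induction_on' with
  | monomial d c =>
    rw [homT_monomial, Polynomial.coeff_C_mul, Polynomial.coeff_X_pow]
    rw [homogeneousComponent_of_mem (n := d.degree)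
      ((mem_homogeneousSubmodule _ _).mpr (isHomogeneous_monomial c rfl))]
    by_cases h : n = d.degree <;> simp [h]
  | add p q hp hq => simp [map_add, hp, hq]

lemma top_component_ne_zero (p : R3) (hp : p ≠ 0) :
    homogeneousComponent p.totalDegree p ≠ 0 := by
  obtain ⟨d, hd, hdeg⟩ := Finset.exists_mem_eq_sup p.support
    (support_nonempty.mpr hp) (fun d => d.sum fun _ e => e)
  intro h
  have hcd : coeff d (homogeneousComponent p.totalDegree p) = coeff d p := by
    rw [coeff_homogeneousComponent, if_pos]
    rw [totalDegree, hdeg]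
    simp [Finsupp.degree, Finsupp.sum]; rfl
  rw [h, coeff_zero] at hcd
  exact mem_support_iff.mp hd hcd.symm

lemma homT_ne_zero (p : R3) (hp : p ≠ 0) : homT p ≠ 0 := by
  intro h
  apply top_component_ne_zero p hp
  rw [← homT_coeff, h, Polynomial.coeff_zero]

lemma homT_natDegree (p : R3) (hp : p ≠ 0) : (homT p).natDegree = p.totalDegree := by
  apply le_antisymm
  · apply Polynomial.natDegree_le_iff_coeff_eq_zero.mpr
    intro n hn
    rw [homT_coeff]
    exact homogeneousComponent_eq_zero n p hn
  · apply Polynomial.le_natDegree_of_ne_zero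
    rw [homT_coeff]
    exact top_component_ne_zero p hp

lemma totalDegree_mul_eq {a b : R3} (ha : a ≠ 0) (hb : b ≠ 0) :
    (a * b).totalDegree = a.totalDegree + b.totalDegree := by
  have := Polynomial.natDegree_mul (homT_ne_zero a ha) (homT_ne_zero b hb)
  rw [← map_mul] at this
  rw [← homT_natDegree _ (mul_ne_zero ha hb), this, homT_natDegree _ ha, homT_natDegree _ hb]

lemma eq_C_of_totalDegree_eq_zero {p : R3} (h : p.totalDegree = 0) :
    p = C (coeff 0 p) := by
  ext d
  by_cases hd : d = 0
  · simp [hd]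
  · rw [coeff_C, if_neg (fun h' => hd h'.symm)]
    by_contra hc
    have := (totalDegree_eq_zero_iff _ p).mp h d (mem_support_iff.mpr hc)
    exact hd (Finsupp.ext fun i => this i)

lemma prime_linear {l : R3} (hl : l.IsHomogeneous 1) (hl0 : l ≠ 0) : Prime l := by
  rw [← UniqueFactorizationMonoid.irreducible_iff_prime]
  constructor
  · intro hu
    obtain ⟨u, rfl⟩ := hu
    have : (u : R3) * ↑u⁻¹ = 1 := u.mul_inv
    have h1 : ((u : R3) * ↑u⁻¹).totalDegree = 0 := by rw [this, totalDegree_one]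
    have hu0 : (u : R3) ≠ 0 := Units.ne_zero u
    have hui0 : (↑u⁻¹ : R3) ≠ 0 := Units.ne_zero u⁻¹
    rw [totalDegree_mul_eq hu0 hui0] at h1
    have := hl.totalDegree hl0
    omega
  · intro a b hab
    have ha0 : a ≠ 0 := by rintro rfl; rw [zero_mul] at hab; exact hl0 hab
    have hb0 : b ≠ 0 := by rintro rfl; rw [mul_zero] at hab; exact hl0 hab
    have hd : a.totalDegree + b.totalDegree = 1 := by
      rw [← totalDegree_mul_eq ha0 hb0, ← hab, hl.totalDegree hl0]
    rcases Nat.eq_zero_or_pos a.totalDegree with h | h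
    · left
      rw [eq_C_of_totalDegree_eq_zero h]
      have : coeff 0 a ≠ 0 := by
        intro hz
        rw [eq_C_of_totalDegree_eq_zero h, hz, map_zero] at ha0
        exact ha0 rfl
      exact IsUnit.of_mul_eq_one (C (coeff 0 a)⁻¹)
        (by rw [← map_mul, mul_inv_cancel₀ this, map_one])
    · right
      have h' : b.totalDegree = 0 := by omega
      rw [eq_C_of_totalDegree_eq_zero h']
      have : coeff 0 b ≠ 0 := by
        intro hz
        rw [eq_C_of_totalDegree_eq_zero h', hz, map_zero] at hb0
        exact hb0 rfl
      exact IsUnit.of_mul_eq_one (C (coeff 0 b)⁻¹)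
        (by rw [← map_mul, mul_inv_cancel₀ this, map_one])

lemma dvd_linear {l v : R3} (hl : l.IsHomogeneous 1) (hl0 : l ≠ 0)
    (hv : v.IsHomogeneous 1) (hdvd : l ∣ v) : ∃ c : ℂ, v = C c * l := by
  obtain ⟨w, hw⟩ := hdvd
  by_cases hv0 : v = 0
  · exact ⟨0, by rw [hv0, map_zero, zero_mul]⟩
  · have hw0 : w ≠ 0 := by rintro rfl; rw [mul_zero] at hw; exact hv0 hw
    have hd := hv.totalDegree hv0
    rw [hw, totalDegree_mul_eq hl0 hw0, hl.totalDegree hl0] at hd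
    have hw' : w.totalDegree = 0 := by omega
    have hwc := eq_C_of_totalDegree_eq_zero hw'
    exact ⟨coeff 0 w, by rw [hw, mul_comm l w]; exact congrArg (· * l) hwc⟩

/-- Let `ℓ₁, ℓ₂` be nonzero linear forms and `q₁, q₂` quadratic forms in `ℂ[X,Y,Z]` with
`ℓ₁ ∤ q₁` and `ℓ₂ ∤ q₂`.  The space of quadruples `(v₁,v₂,u₁,u₂)` (with `v₁, u₂` linear
and `v₂, u₁` quadratic) satisfying `v₁·q₁ + ℓ₂·u₁ = 0`, `v₁·ℓ₁ + ℓ₂·u₂ = 0`,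
`v₂·q₁ + q₂·u₁ = 0`, `v₂·ℓ₁ + q₂·u₂ = 0` is one-dimensional, spanned by
`(ℓ₂, q₂, −q₁, −ℓ₁)`. -/
theorem stmt8 (l₁ l₂ q₁ q₂ : R3)
    (hl₁ : l₁.IsHomogeneous 1) (hl₂ : l₂.IsHomogeneous 1)
    (hl₁0 : l₁ ≠ 0) (hl₂0 : l₂ ≠ 0)
    (hq₁ : q₁.IsHomogeneous 2) (hq₂ : q₂.IsHomogeneous 2)
    (hnd₁ : ¬ l₁ ∣ q₁) (hnd₂ : ¬ l₂ ∣ q₂) :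
    {p : R3 × R3 × R3 × R3 |
        p.1.IsHomogeneous 1 ∧ p.2.1.IsHomogeneous 2 ∧ p.2.2.1.IsHomogeneous 2 ∧
        p.2.2.2.IsHomogeneous 1 ∧
        p.1 * q₁ + l₂ * p.2.2.1 = 0 ∧ p.1 * l₁ + l₂ * p.2.2.2 = 0 ∧
        p.2.1 * q₁ + q₂ * p.2.2.1 = 0 ∧ p.2.1 * l₁ + q₂ * p.2.2.2 = 0}
      = {p : R3 × R3 × R3 × R3 |
          ∃ c : ℂ, p = (c • l₂, c • q₂, -(c • q₁), -(c • l₁))} := by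
  have hq₁0 : q₁ ≠ 0 := fun h => hnd₁ (h ▸ dvd_zero l₁)
  have hpr : Prime l₂ := prime_linear hl₂ hl₂0
  ext ⟨v₁, v₂, u₁, u₂⟩
  simp only [Set.mem_setOf_eq]
  constructor
  · rintro ⟨hv1, hv2, hu1, hu2, e1, e2, e3, e4⟩
    have hd1 : l₂ ∣ v₁ * q₁ := ⟨-u₁, by linear_combination e1⟩
    have hlv : l₂ ∣ v₁ := by
      rcases hpr.2.2 _ _ hd1 with h | h
      · exact h
      · have hd2 : l₂ ∣ v₁ * l₁ := ⟨-u₂, by linear_combination e2⟩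
        rcases hpr.2.2 _ _ hd2 with h' | h'
        · exact h'
        · exfalso
          obtain ⟨c, hc⟩ := dvd_linear hl₂ hl₂0 hl₁ h'
          have hc0 : c ≠ 0 := by
            rintro rfl
            rw [map_zero, zero_mul] at hc
            exact hl₁0 hc
          obtain ⟨t, ht⟩ := h
          apply hnd₁
          refine ⟨C c⁻¹ * t, ?_⟩
          have hcc : (C c : R3) * C c⁻¹ = 1 := by
            rw [← map_mul, mul_inv_cancel₀ hc0, map_one]
          rw [ht, hc]
          linear_combination (-(l₂ * t)) * hcc
    obtain ⟨c, hc⟩ := dvd_linear hl₂ hl₂0 hv1 hlv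
    refine ⟨c, ?_⟩
    have hu2' : u₂ = -(C c * l₁) := by
      have h0 : l₂ * (u₂ + C c * l₁) = 0 := by linear_combination e2 - l₁ * hc
      rcases mul_eq_zero.mp h0 with h | h
      · exact absurd h hl₂0
      · linear_combination h
    have hu1' : u₁ = -(C c * q₁) := by
      have h0 : l₂ * (u₁ + C c * q₁) = 0 := by linear_combination e1 - q₁ * hc
      rcases mul_eq_zero.mp h0 with h | h
      · exact absurd h hl₂0
      · linear_combination h
    have hv2' : v₂ = C c * q₂ := by
      have h0 : q₁ * (v₂ - C c * q₂) = 0 := by linear_combination e3 - q₂ * hu1'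
      rcases mul_eq_zero.mp h0 with h | h
      · exact absurd h hq₁0
      · linear_combination h
    simp only [Prod.mk.injEq, smul_eq_C_mul]
    exact ⟨hc, hv2', by rw [hu1'], by rw [hu2']⟩
  · rintro ⟨c, hc⟩
    simp only [Prod.mk.injEq] at hc
    obtain ⟨h1, h2, h3, h4⟩ := hc
    subst h1 h2 h3 h4
    simp only [smul_eq_C_mul]
    refine ⟨hl₂.C_mul c, hq₂.C_mul c, (hq₁.C_mul c).neg, (hl₁.C_mul c).neg, ?_, ?_, ?_, ?_⟩ <;> ring
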